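/- Let n = 2k or n = 2k+1 with k ≥ 1, and let λ₁ > λ₂ > ⋯ > λ_k > 0. A pair (x, g), with x symmetric n×n real and g ∈ GL(n,ℝ) with det g > 0, satisfies Ad*(x,g)(1ₙ, H(λ)) = (1ₙ, H(λ)) if and only if x = 0 and g is block-diagonal with k consecutive 2×2 diagonal blocks each equal to a rotation matrix [[cos θᵢ, −sin θᵢ],[sin θᵢ, cos θᵢ]] for some θᵢ ∈ ℝ (followed by a final 1×1 block equal to 1 when n = 2k+1). In particular the stabilizer of (1ₙ, H(λ)) is isomorphic to SO(2) × ⋯ × SO(2) (k factors). -/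

import Mathlib

open Matrix

/-- The coadjoint action Ad*(x,g)(c,a) = (ǧ c g⁻¹, g a g⁻¹ + x ǧ c g⁻¹),
    where ǧ = (gᵀ)⁻¹. -/
noncomputable def coadjAct {n : ℕ} (x g c a : Matrix (Fin n) (Fin n) ℝ) :
    Matrix (Fin n) (Fin n) ℝ × Matrix (Fin n) (Fin n) ℝ :=
  ((gᵀ)⁻¹ * c * g⁻¹, g * a * g⁻¹ + x * ((gᵀ)⁻¹ * c * g⁻¹))

/-- The n×n skew-symmetric block-diagonal matrix with k consecutive 2×2 blocks
    [[0, λᵢ],[−λᵢ, 0]] (and a final zero block if n > 2k). -/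
def Hmat (n k : ℕ) (lam : Fin k → ℝ) : Matrix (Fin n) (Fin n) ℝ :=
  fun i j =>
    if h1 : (j : ℕ) = (i : ℕ) + 1 ∧ (i : ℕ) % 2 = 0 ∧ (i : ℕ) / 2 < k then
      lam ⟨(i : ℕ) / 2, h1.2.2⟩
    else if h2 : (i : ℕ) = (j : ℕ) + 1 ∧ (j : ℕ) % 2 = 0 ∧ (j : ℕ) / 2 < k then
      -lam ⟨(j : ℕ) / 2, h2.2.2⟩
    else 0

/-- The block-diagonal matrix with k consecutive 2×2 rotation blocks
    [[cos θᵢ, −sin θᵢ],[sin θᵢ, cos θᵢ]] (and a final 1×1 block equal to 1 if n > 2k). -/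
noncomputable def RotMat (n k : ℕ) (θ : Fin k → ℝ) : Matrix (Fin n) (Fin n) ℝ :=
  fun i j =>
    if h : (i : ℕ) = (j : ℕ) ∧ (i : ℕ) / 2 < k then Real.cos (θ ⟨(i : ℕ) / 2, h.2⟩)
    else if (i : ℕ) = (j : ℕ) then 1
    else if h2 : (j : ℕ) = (i : ℕ) + 1 ∧ (i : ℕ) % 2 = 0 ∧ (i : ℕ) / 2 < k then
      -Real.sin (θ ⟨(i : ℕ) / 2, h2.2.2⟩)
    else if h3 : (i : ℕ) = (j : ℕ) + 1 ∧ (j : ℕ) % 2 = 0 ∧ (j : ℕ) / 2 < k then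
      Real.sin (θ ⟨(j : ℕ) / 2, h3.2.2⟩)
    else 0


namespace StabAux
def BD (n k : ℕ) (a b : Fin k → ℝ) (c : ℝ) : Matrix (Fin n) (Fin n) ℝ :=
  fun i j =>
    if h : (i : ℕ) = (j : ℕ) ∧ (i : ℕ) / 2 < k then a ⟨(i : ℕ) / 2, h.2⟩
    else if (i : ℕ) = (j : ℕ) then c
    else if h2 : (j : ℕ) = (i : ℕ) + 1 ∧ (i : ℕ) % 2 = 0 ∧ (i : ℕ) / 2 < k then
      -(b ⟨(i : ℕ) / 2, h2.2.2⟩)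
    else if h3 : (i : ℕ) = (j : ℕ) + 1 ∧ (j : ℕ) % 2 = 0 ∧ (j : ℕ) / 2 < k then
      b ⟨(j : ℕ) / 2, h3.2.2⟩
    else 0

variable {n k : ℕ}


variable {n k : ℕ}

lemma BD_diag {a b : Fin k → ℝ} {c : ℝ} {i j : Fin n} (hij : (i : ℕ) = (j : ℕ))
    {m : Fin k} (hm : (m : ℕ) = (i : ℕ) / 2) : BD n k a b c i j = a m := by
  have hik : (i : ℕ) / 2 < k := hm ▸ m.2
  rw [BD, dif_pos ⟨hij, hik⟩]
  exact congrArg a (Fin.ext hm.symm)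

lemma BD_diag' {a b : Fin k → ℝ} {c : ℝ} {i j : Fin n} (hij : (i : ℕ) = (j : ℕ))
    (hik : ¬ (i : ℕ) / 2 < k) : BD n k a b c i j = c := by
  rw [BD, dif_neg (by tauto), if_pos hij]

lemma BD_up {a b : Fin k → ℝ} {c : ℝ} {i j : Fin n} (h : (j : ℕ) = (i : ℕ) + 1)
    (he : (i : ℕ) % 2 = 0) {m : Fin k} (hm : (m : ℕ) = (i : ℕ) / 2) :
    BD n k a b c i j = -(b m) := by
  have hik : (i : ℕ) / 2 < k := hm ▸ m.2
  rw [BD, dif_neg (by omega), if_neg (by omega), dif_pos ⟨h, he, hik⟩]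
  exact congrArg (fun z => -(b z)) (Fin.ext hm.symm)

lemma BD_lo {a b : Fin k → ℝ} {c : ℝ} {i j : Fin n} (h : (i : ℕ) = (j : ℕ) + 1)
    (he : (j : ℕ) % 2 = 0) {m : Fin k} (hm : (m : ℕ) = (j : ℕ) / 2) :
    BD n k a b c i j = b m := by
  have hjk : (j : ℕ) / 2 < k := hm ▸ m.2
  rw [BD, dif_neg (by omega), if_neg (by omega), dif_neg (by omega), dif_pos ⟨h, he, hjk⟩]
  exact congrArg b (Fin.ext hm.symm)

lemma BD_zero {a b : Fin k → ℝ} {c : ℝ} {i j : Fin n}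
    (h1 : ¬ (i : ℕ) = (j : ℕ))
    (h2 : ¬ ((j : ℕ) = (i : ℕ) + 1 ∧ (i : ℕ) % 2 = 0 ∧ (i : ℕ) / 2 < k))
    (h3 : ¬ ((i : ℕ) = (j : ℕ) + 1 ∧ (j : ℕ) % 2 = 0 ∧ (j : ℕ) / 2 < k)) :
    BD n k a b c i j = 0 := by
  rw [BD, dif_neg (by tauto), if_neg h1, dif_neg h2, dif_neg h3]

lemma sum_eq_pair {N : ℕ} (f : Fin N → ℝ) (i j : Fin N) (hij : i ≠ j)
    (h : ∀ m, m ≠ i → m ≠ j → f m = 0) : ∑ m, f m = f i + f j := by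
  rw [← Finset.sum_pair hij]
  refine (Finset.sum_subset (Finset.subset_univ _) (fun m _ hm => ?_)).symm
  simp only [Finset.mem_insert, Finset.mem_singleton, not_or] at hm
  exact h m hm.1 hm.2


lemma mul_BD (hnk : 2 * k ≤ n) (a b a' b' : Fin k → ℝ) (c c' : ℝ) :
    BD n k a b c * BD n k a' b' c' =
      BD n k (fun m => a m * a' m - b m * b' m) (fun m => a m * b' m + b m * a' m) (c * c') := by
  ext i j
  rw [mul_apply]
  have hin := i.isLt
  have hjn := j.isLt
  by_cases hik : (i : ℕ) / 2 < k
  · set M : Fin k := ⟨(i : ℕ) / 2, hik⟩ with hM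
    have hm : (M : ℕ) = (i : ℕ) / 2 := rfl
    have h1n : (if (i : ℕ) % 2 = 0 then (i : ℕ) + 1 else (i : ℕ) - 1) < n := by
      split <;> omega
    set i' : Fin n := ⟨_, h1n⟩ with hi'
    have hvi : ((i' : ℕ) = (i : ℕ) + 1 ∧ (i : ℕ) % 2 = 0) ∨
        ((i' : ℕ) + 1 = (i : ℕ) ∧ (i : ℕ) % 2 = 1 ∧ (i' : ℕ) % 2 = 0) := by
      by_cases hp : (i : ℕ) % 2 = 0
      · left
        refine ⟨?_, hp⟩
        show (if (i : ℕ) % 2 = 0 then (i : ℕ) + 1 else (i : ℕ) - 1) = (i : ℕ) + 1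
        rw [if_pos hp]
      · right
        have : (i' : ℕ) = (i : ℕ) - 1 := by
          show (if (i : ℕ) % 2 = 0 then (i : ℕ) + 1 else (i : ℕ) - 1) = (i : ℕ) - 1
          rw [if_neg hp]
        omega
    have hne : i ≠ i' := fun h => by
      have := congrArg Fin.val h; omega
    rw [sum_eq_pair _ i i' hne (fun m hm1 hm2 => by
      have hv1 : (m : ℕ) ≠ (i : ℕ) := fun h => hm1 (Fin.ext h)
      have hv2 : (m : ℕ) ≠ (i' : ℕ) := fun h => hm2 (Fin.ext h)
      rw [BD_zero (by omega) (by omega) (by omega), zero_mul])]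
    have e1 : BD n k a b c i i = a M := BD_diag rfl hm
    rw [e1]
    rcases hvi with ⟨hv, hp⟩ | ⟨hv, hp, hp'⟩
    · -- i even, i' = i + 1
      have e2 : BD n k a b c i i' = -(b M) := BD_up (by omega) hp hm
      rw [e2]
      by_cases hji : (j : ℕ) = (i : ℕ)
      · rw [(BD_diag hji.symm hm : BD n k a' b' c' i j = a' M),
          (BD_lo (by omega) (by omega) (by omega) : BD n k a' b' c' i' j = b' M),
          (BD_diag hji.symm hm : BD n k (fun m => a m * a' m - b m * b' m)
            (fun m => a m * b' m + b m * a' m) (c * c') i j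
            = (fun m => a m * a' m - b m * b' m) M)]
        all_goals (beta_reduce; ring)
      · by_cases hji' : (j : ℕ) = (i' : ℕ)
        · rw [(BD_up (by omega) hp hm : BD n k a' b' c' i j = -(b' M)),
            (BD_diag (by omega) (by omega) : BD n k a' b' c' i' j = a' M),
            (BD_up (by omega) hp hm : BD n k (fun m => a m * a' m - b m * b' m)
              (fun m => a m * b' m + b m * a' m) (c * c') i j
              = -((fun m => a m * b' m + b m * a' m) M))]
          all_goals (beta_reduce; ring)
        · rw [(BD_zero (by omega) (by omega) (by omega) : BD n k a' b' c' i j = 0),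
            (BD_zero (by omega) (by omega) (by omega) : BD n k a' b' c' i' j = 0),
            (BD_zero (by omega) (by omega) (by omega) :
              BD n k (fun m => a m * a' m - b m * b' m)
                (fun m => a m * b' m + b m * a' m) (c * c') i j = 0)]
          ring
    · -- i odd, i' = i - 1
      have e2 : BD n k a b c i i' = b M := BD_lo (by omega) (by omega) (by omega)
      rw [e2]
      by_cases hji : (j : ℕ) = (i : ℕ)
      · rw [(BD_diag hji.symm hm : BD n k a' b' c' i j = a' M),
          (BD_up (by omega) (by omega) (by omega) : BD n k a' b' c' i' j = -(b' M)),
          (BD_diag hji.symm hm : BD n k (fun m => a m * a' m - b m * b' m)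
            (fun m => a m * b' m + b m * a' m) (c * c') i j
            = (fun m => a m * a' m - b m * b' m) M)]
        all_goals (beta_reduce; ring)
      · by_cases hji' : (j : ℕ) = (i' : ℕ)
        · rw [(BD_lo (by omega) (by omega) (by omega) : BD n k a' b' c' i j = b' M),
            (BD_diag (by omega) (by omega) : BD n k a' b' c' i' j = a' M),
            (BD_lo (by omega) (by omega) (by omega) :
              BD n k (fun m => a m * a' m - b m * b' m)
                (fun m => a m * b' m + b m * a' m) (c * c') i j
                = (fun m => a m * b' m + b m * a' m) M)]
          all_goals (beta_reduce; ring)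
        · rw [(BD_zero (by omega) (by omega) (by omega) : BD n k a' b' c' i j = 0),
            (BD_zero (by omega) (by omega) (by omega) : BD n k a' b' c' i' j = 0),
            (BD_zero (by omega) (by omega) (by omega) :
              BD n k (fun m => a m * a' m - b m * b' m)
                (fun m => a m * b' m + b m * a' m) (c * c') i j = 0)]
          ring
  · rw [Finset.sum_eq_single i (fun m _ hm1 => by
      have hv1 : (m : ℕ) ≠ (i : ℕ) := fun h => hm1 (Fin.ext h)
      rw [BD_zero (by omega) (by omega) (by omega), zero_mul])
      (fun h => absurd (Finset.mem_univ i) h)]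
    rw [BD_diag' rfl hik]
    by_cases hji : (i : ℕ) = (j : ℕ)
    · rw [(BD_diag' hji hik : BD n k a' b' c' i j = c'),
        (BD_diag' hji hik : BD n k (fun m => a m * a' m - b m * b' m)
          (fun m => a m * b' m + b m * a' m) (c * c') i j = c * c')]
    · rw [(BD_zero (by omega) (by omega) (by omega) : BD n k a' b' c' i j = 0),
        (BD_zero (by omega) (by omega) (by omega) :
          BD n k (fun m => a m * a' m - b m * b' m)
            (fun m => a m * b' m + b m * a' m) (c * c') i j = 0)]
      ring


lemma Hmat_eq_BD (lam : Fin k → ℝ) :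
    Hmat n k lam = BD n k (fun _ => 0) (fun m => -lam m) 0 := by
  ext i j
  simp only [Hmat, BD]
  split_ifs <;> first | rfl  | ring1 | (exfalso; omega)

lemma RotMat_eq_BD (θ : Fin k → ℝ) :
    RotMat n k θ = BD n k (fun m => Real.cos (θ m)) (fun m => Real.sin (θ m)) 1 := by
  ext i j
  simp only [RotMat, BD]

lemma one_eq_BD :
    (1 : Matrix (Fin n) (Fin n) ℝ) = BD n k (fun _ => 1) (fun _ => 0) 1 := by
  ext i j
  rw [Matrix.one_apply]
  simp only [Fin.ext_iff, BD]
  split_ifs <;> first | rfl  | ring1 | (exfalso; omega)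

lemma BD_transpose (a b : Fin k → ℝ) (c : ℝ) :
    (BD n k a b c)ᵀ = BD n k a (fun m => -(b m)) c := by
  ext i j
  rw [Matrix.transpose_apply]
  simp only [BD]
  split_ifs <;>
    first
      | rfl
      | exact rfl
      | ring1
      | (exfalso; omega)
      | (congr 1; simp only [Fin.mk.injEq]; omega)
      | (exact (neg_neg (b ⟨(i : ℕ) / 2, by omega⟩)).symm)

lemma BD_congr {a b a' b' : Fin k → ℝ} {c c' : ℝ} (h1 : ∀ m, a m = a' m)
    (h2 : ∀ m, b m = b' m) (h3 : c = c') : BD n k a b c = BD n k a' b' c' := by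
  rw [funext h1, funext h2, h3]

lemma Hmat_transpose (lam : Fin k → ℝ) : (Hmat n k lam)ᵀ = -(Hmat n k lam) := by
  rw [Hmat_eq_BD, BD_transpose]
  ext i j
  rw [Matrix.neg_apply]
  simp only [BD]
  split_ifs <;> first | rfl | exact rfl  | ring1 | (exfalso; omega)

lemma BD_diagonal (c : ℝ) :
    BD n k (fun _ => 1) (fun _ => 0) c =
      Matrix.diagonal (fun i : Fin n => if (i : ℕ) / 2 < k then 1 else c) := by
  ext i j
  rw [Matrix.diagonal_apply]
  simp only [Fin.ext_iff, BD]
  split_ifs <;> first | rfl  | ring1 | (exfalso; omega)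

lemma Hmat_up {lam : Fin k → ℝ} {i j : Fin n} (h : (j : ℕ) = (i : ℕ) + 1)
    (he : (i : ℕ) % 2 = 0) {m : Fin k} (hm : (m : ℕ) = (i : ℕ) / 2) :
    Hmat n k lam i j = lam m := by
  have hik : (i : ℕ) / 2 < k := hm ▸ m.2
  rw [Hmat, dif_pos ⟨h, he, hik⟩]
  exact congrArg lam (Fin.ext hm.symm)

lemma Hmat_lo {lam : Fin k → ℝ} {i j : Fin n} (h : (i : ℕ) = (j : ℕ) + 1)
    (he : (j : ℕ) % 2 = 0) {m : Fin k} (hm : (m : ℕ) = (j : ℕ) / 2) :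
    Hmat n k lam i j = -lam m := by
  have hjk : (j : ℕ) / 2 < k := hm ▸ m.2
  rw [Hmat, dif_neg (by omega), dif_pos ⟨h, he, hjk⟩]
  exact congrArg (fun z => -lam z) (Fin.ext hm.symm)

lemma Hmat_zero {lam : Fin k → ℝ} {i j : Fin n}
    (h1 : ¬ ((j : ℕ) = (i : ℕ) + 1 ∧ (i : ℕ) % 2 = 0 ∧ (i : ℕ) / 2 < k))
    (h2 : ¬ ((i : ℕ) = (j : ℕ) + 1 ∧ (j : ℕ) % 2 = 0 ∧ (j : ℕ) / 2 < k)) :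
    Hmat n k lam i j = 0 := by
  rw [Hmat, dif_neg h1, dif_neg h2]

lemma gH_apply (lam : Fin k → ℝ) (g : Matrix (Fin n) (Fin n) ℝ) (i j : Fin n)
    {m : Fin k} (hm : (m : ℕ) = (j : ℕ) / 2) (j' : Fin n)
    (hj' : ((j : ℕ) % 2 = 0 ∧ (j' : ℕ) = (j : ℕ) + 1) ∨
      ((j : ℕ) % 2 = 1 ∧ (j' : ℕ) + 1 = (j : ℕ))) :
    (g * Hmat n k lam) i j = (if (j : ℕ) % 2 = 0 then -lam m else lam m) * g i j' := by
  rw [Matrix.mul_apply]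
  rw [Finset.sum_eq_single j' (fun x _ hx => by
    have hv : (x : ℕ) ≠ (j' : ℕ) := fun h => hx (Fin.ext h)
    rw [Hmat_zero (by omega) (by omega), mul_zero])
    (fun h => absurd (Finset.mem_univ _) h)]
  rcases hj' with ⟨hp, hv⟩ | ⟨hp, hv⟩
  · rw [Hmat_lo (i := j') (j := j) (by omega) hp hm, if_pos hp]
    ring
  · rw [Hmat_up (i := j') (j := j) (by omega) (by omega) (by omega : (m : ℕ) = (j' : ℕ) / 2),
      if_neg (by omega)]
    ring

lemma gH_apply0 (lam : Fin k → ℝ) (g : Matrix (Fin n) (Fin n) ℝ) (i j : Fin n)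
    (hjk : ¬ (j : ℕ) / 2 < k) : (g * Hmat n k lam) i j = 0 := by
  rw [Matrix.mul_apply]
  exact Finset.sum_eq_zero fun x _ => by
    rw [Hmat_zero (by omega) (by omega), mul_zero]

lemma Hg_apply (lam : Fin k → ℝ) (g : Matrix (Fin n) (Fin n) ℝ) (i j : Fin n)
    {m : Fin k} (hm : (m : ℕ) = (i : ℕ) / 2) (i' : Fin n)
    (hi' : ((i : ℕ) % 2 = 0 ∧ (i' : ℕ) = (i : ℕ) + 1) ∨
      ((i : ℕ) % 2 = 1 ∧ (i' : ℕ) + 1 = (i : ℕ))) :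
    (Hmat n k lam * g) i j = (if (i : ℕ) % 2 = 0 then lam m else -lam m) * g i' j := by
  rw [Matrix.mul_apply]
  rw [Finset.sum_eq_single i' (fun x _ hx => by
    have hv : (x : ℕ) ≠ (i' : ℕ) := fun h => hx (Fin.ext h)
    rw [Hmat_zero (by omega) (by omega), zero_mul])
    (fun h => absurd (Finset.mem_univ _) h)]
  rcases hi' with ⟨hp, hv⟩ | ⟨hp, hv⟩
  · rw [Hmat_up (i := i) (j := i') (by omega) hp hm, if_pos hp]
  · rw [Hmat_lo (i := i) (j := i') (by omega) (by omega) (by omega : (m : ℕ) = (i' : ℕ) / 2),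
      if_neg (by omega)]

lemma Hg_apply0 (lam : Fin k → ℝ) (g : Matrix (Fin n) (Fin n) ℝ) (i j : Fin n)
    (hik : ¬ (i : ℕ) / 2 < k) : (Hmat n k lam * g) i j = 0 := by
  rw [Matrix.mul_apply]
  exact Finset.sum_eq_zero fun x _ => by
    rw [Hmat_zero (by omega) (by omega), zero_mul]

lemma cancel_aux {p q u v : ℝ} (hp : p ≠ 0) (hpq : p ^ 2 ≠ q ^ 2)
    (e1 : p * v = q * u) (e2 : p * u = q * v) : u = 0 := by
  have hv : (p ^ 2 - q ^ 2) * v = 0 := by linear_combination p * e1 + q * e2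
  have hv0 : v = 0 := by
    rcases mul_eq_zero.mp hv with h | h
    · exact absurd (sub_eq_zero.mp h) hpq
    · exact h
  have h3 : p * u = 0 := by rw [e2, hv0, mul_zero]
  exact (mul_eq_zero.mp h3).resolve_left hp

lemma sq_ne_of_pos_ne {x y : ℝ} (hx : 0 < x) (hy : 0 < y) (h : x ≠ y) : x ^ 2 ≠ y ^ 2 :=
  fun he => h (by nlinarith)

lemma exists_cos_sin {x y : ℝ} (h : x ^ 2 + y ^ 2 = 1) :
    ∃ θ : ℝ, Real.cos θ = x ∧ Real.sin θ = y := by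
  have hn : Complex.normSq ⟨x, y⟩ = 1 := by
    rw [Complex.normSq_mk]; linear_combination h
  have habs : ‖(⟨x, y⟩ : ℂ)‖ = 1 := by
    have h1 : ‖(⟨x, y⟩ : ℂ)‖ ^ 2 = 1 := by rw [Complex.sq_norm, hn]
    have h2 := norm_nonneg (⟨x, y⟩ : ℂ)
    nlinarith
  have hz0 : (⟨x, y⟩ : ℂ) ≠ 0 := by
    intro h0
    rw [h0] at habs
    simp at habs
  refine ⟨Complex.arg ⟨x, y⟩, ?_, ?_⟩
  · rw [Complex.cos_arg hz0, habs]
    simp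
  · rw [Complex.sin_arg, habs]
    simp

end StabAux


section Main
open StabAux

theorem stabilizer_of_regular_point (n k : ℕ) (hk : 1 ≤ k)
    (hn : n = 2 * k ∨ n = 2 * k + 1) (lam : Fin k → ℝ)
    (hstrict : ∀ i j : Fin k, i < j → lam j < lam i) (hpos : ∀ i, 0 < lam i)
    (x g : Matrix (Fin n) (Fin n) ℝ) (hx : x.IsSymm) (hg : 0 < g.det) :
    coadjAct x g 1 (Hmat n k lam) = (1, Hmat n k lam) ↔
      x = 0 ∧ ∃ θ : Fin k → ℝ, g = RotMat n k θ := by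
  have hnk : 2 * k ≤ n := by rcases hn with h | h <;> omega
  have hn2 : n ≤ 2 * k + 1 := by rcases hn with h | h <;> omega
  constructor
  · intro h
    simp only [coadjAct, Prod.mk.injEq, mul_one] at h
    obtain ⟨h1, h2⟩ := h
    have hdet : IsUnit g.det := isUnit_iff_ne_zero.2 (ne_of_gt hg)
    have hO : g * gᵀ = 1 := by
      have hu : IsUnit (g * gᵀ).det := by
        rw [Matrix.det_mul, Matrix.det_transpose]; exact hdet.mul hdet
      have h3 : (g * gᵀ)⁻¹ = 1 := by rw [Matrix.mul_inv_rev]; exact h1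
      calc g * gᵀ = ((g * gᵀ)⁻¹)⁻¹ := (Matrix.nonsing_inv_nonsing_inv _ hu).symm
        _ = (1 : Matrix (Fin n) (Fin n) ℝ)⁻¹ := by rw [h3]
        _ = 1 := inv_one
    have hOt : gᵀ * g = 1 := mul_eq_one_comm.mp hO
    have hginv : g⁻¹ = gᵀ := Matrix.inv_eq_right_inv hO
    rw [h1, hginv, Matrix.mul_one] at h2
    simp only [Matrix.mul_assoc] at h2
    have hx0 : x = 0 := by
      have h2T := congrArg Matrix.transpose h2
      simp only [Matrix.transpose_add, Matrix.transpose_mul, Matrix.transpose_transpose,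
        Hmat_transpose, hx.eq, Matrix.mul_neg, Matrix.neg_mul, Matrix.mul_assoc] at h2T
      have e1 : x = Hmat n k lam - g * (Hmat n k lam * gᵀ) := eq_sub_of_add_eq' h2
      have e2 : x = -Hmat n k lam - -(g * (Hmat n k lam * gᵀ)) := eq_sub_of_add_eq' h2T
      have hxx : x + x = 0 := by
        have h5 := congrArg₂ (· + ·) e1 e2
        exact h5.trans (by abel)
      have h2s : (2 : ℝ) • x = 0 := by rw [two_smul]; exact hxx
      rcases smul_eq_zero.mp h2s with h' | h'
      · norm_num at h'
      · exact h'
    have hcom : g * Hmat n k lam = Hmat n k lam * g := by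
      rw [hx0, add_zero] at h2
      have h4 := congrArg (fun M => M * g) h2
      simp only [Matrix.mul_assoc] at h4
      rw [hOt, Matrix.mul_one] at h4
      exact h4
    refine ⟨hx0, ?_⟩
    have hE : ∀ i j : Fin n, (g * Hmat n k lam) i j = (Hmat n k lam * g) i j :=
      fun i j => by rw [hcom]
    have lam_ne : ∀ m m' : Fin k, (m : ℕ) ≠ (m' : ℕ) → lam m ≠ lam m' := by
      intro m m' hne heq
      rcases lt_trichotomy m m' with h' | h' | h'
      · exact (hstrict m m' h').ne heq.symm
      · exact hne (congrArg Fin.val h')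
      · exact (hstrict m' m h').ne heq
    have claim1 : ∀ i j : Fin n, (i : ℕ) / 2 ≠ (j : ℕ) / 2 → g i j = 0 := by
      intro i j hij
      have hin := i.isLt
      have hjn := j.isLt
      by_cases hik : (i : ℕ) / 2 < k <;> by_cases hjk : (j : ℕ) / 2 < k
      · set Mi : Fin k := ⟨(i : ℕ) / 2, hik⟩ with hMi
        set Mj : Fin k := ⟨(j : ℕ) / 2, hjk⟩ with hMj
        have hMiv : (Mi : ℕ) = (i : ℕ) / 2 := rfl
        have hMjv : (Mj : ℕ) = (j : ℕ) / 2 := rfl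
        have hi'lt : (if (i : ℕ) % 2 = 0 then (i : ℕ) + 1 else (i : ℕ) - 1) < n := by
          split <;> omega
        set i' : Fin n := ⟨_, hi'lt⟩ with hi'd
        have hvi : ((i : ℕ) % 2 = 0 ∧ (i' : ℕ) = (i : ℕ) + 1) ∨
            ((i : ℕ) % 2 = 1 ∧ (i' : ℕ) + 1 = (i : ℕ)) := by
          by_cases hp : (i : ℕ) % 2 = 0
          · exact Or.inl ⟨hp, by
              show (if (i : ℕ) % 2 = 0 then (i : ℕ) + 1 else (i : ℕ) - 1) = (i : ℕ) + 1
              rw [if_pos hp]⟩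
          · refine Or.inr ⟨by omega, ?_⟩
            have hv' : (i' : ℕ) = (i : ℕ) - 1 := by
              show (if (i : ℕ) % 2 = 0 then (i : ℕ) + 1 else (i : ℕ) - 1) = (i : ℕ) - 1
              rw [if_neg hp]
            omega
        have hj'lt : (if (j : ℕ) % 2 = 0 then (j : ℕ) + 1 else (j : ℕ) - 1) < n := by
          split <;> omega
        set j' : Fin n := ⟨_, hj'lt⟩ with hj'd
        have hvj : ((j : ℕ) % 2 = 0 ∧ (j' : ℕ) = (j : ℕ) + 1) ∨
            ((j : ℕ) % 2 = 1 ∧ (j' : ℕ) + 1 = (j : ℕ)) := by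
          by_cases hp : (j : ℕ) % 2 = 0
          · exact Or.inl ⟨hp, by
              show (if (j : ℕ) % 2 = 0 then (j : ℕ) + 1 else (j : ℕ) - 1) = (j : ℕ) + 1
              rw [if_pos hp]⟩
          · refine Or.inr ⟨by omega, ?_⟩
            have hv' : (j' : ℕ) = (j : ℕ) - 1 := by
              show (if (j : ℕ) % 2 = 0 then (j : ℕ) + 1 else (j : ℕ) - 1) = (j : ℕ) - 1
              rw [if_neg hp]
            omega
        have e1 := hE i' j
        rw [gH_apply lam g i' j (m := Mj) (by omega) j' (by omega),
          Hg_apply lam g i' j (m := Mi) (by omega) i (by omega)] at e1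
        have e2 := hE i j'
        rw [gH_apply lam g i j' (m := Mj) (by omega) j (by omega),
          Hg_apply lam g i j' (m := Mi) (by omega) i' (by omega)] at e2
        have hpj0 : lam Mj ≠ 0 := ne_of_gt (hpos Mj)
        have hsq : lam Mj ^ 2 ≠ lam Mi ^ 2 :=
          sq_ne_of_pos_ne (hpos Mj) (hpos Mi) (lam_ne _ _ (by omega))
        rcases hvi with ⟨hpi, hvi'⟩ | ⟨hpi, hvi'⟩ <;> rcases hvj with ⟨hpj, hvj'⟩ | ⟨hpj, hvj'⟩
        · rw [if_pos hpj, if_neg (by omega : ¬ (i' : ℕ) % 2 = 0)] at e1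
          rw [if_neg (by omega : ¬ (j' : ℕ) % 2 = 0), if_pos hpi] at e2
          exact cancel_aux (p := lam Mj) (q := lam Mi) hpj0 hsq
            (by linear_combination -e1) e2
        · rw [if_neg (by omega : ¬ (j : ℕ) % 2 = 0),
            if_neg (by omega : ¬ (i' : ℕ) % 2 = 0)] at e1
          rw [if_pos (by omega : (j' : ℕ) % 2 = 0), if_pos hpi] at e2
          exact cancel_aux (p := -lam Mj) (q := lam Mi) (neg_ne_zero.2 hpj0)
            (by simpa [neg_sq] using hsq) (by linear_combination -e1) e2
        · rw [if_pos hpj, if_pos (by omega : (i' : ℕ) % 2 = 0)] at e1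
          rw [if_neg (by omega : ¬ (j' : ℕ) % 2 = 0),
            if_neg (by omega : ¬ (i : ℕ) % 2 = 0)] at e2
          exact cancel_aux (p := lam Mj) (q := -lam Mi) hpj0
            (by simpa [neg_sq] using hsq) (by linear_combination -e1) e2
        · rw [if_neg (by omega : ¬ (j : ℕ) % 2 = 0),
            if_pos (by omega : (i' : ℕ) % 2 = 0)] at e1
          rw [if_pos (by omega : (j' : ℕ) % 2 = 0),
            if_neg (by omega : ¬ (i : ℕ) % 2 = 0)] at e2
          exact cancel_aux (p := lam Mj) (q := lam Mi) hpj0 hsq e1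
            (by linear_combination -e2)
      · -- i in a block, j in the tail
        set Mi : Fin k := ⟨(i : ℕ) / 2, hik⟩ with hMi
        have hMiv : (Mi : ℕ) = (i : ℕ) / 2 := rfl
        have hi'lt : (if (i : ℕ) % 2 = 0 then (i : ℕ) + 1 else (i : ℕ) - 1) < n := by
          split <;> omega
        set i' : Fin n := ⟨_, hi'lt⟩ with hi'd
        have hvi : ((i : ℕ) % 2 = 0 ∧ (i' : ℕ) = (i : ℕ) + 1) ∨
            ((i : ℕ) % 2 = 1 ∧ (i' : ℕ) + 1 = (i : ℕ)) := by
          by_cases hp : (i : ℕ) % 2 = 0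
          · exact Or.inl ⟨hp, by
              show (if (i : ℕ) % 2 = 0 then (i : ℕ) + 1 else (i : ℕ) - 1) = (i : ℕ) + 1
              rw [if_pos hp]⟩
          · refine Or.inr ⟨by omega, ?_⟩
            have hv' : (i' : ℕ) = (i : ℕ) - 1 := by
              show (if (i : ℕ) % 2 = 0 then (i : ℕ) + 1 else (i : ℕ) - 1) = (i : ℕ) - 1
              rw [if_neg hp]
            omega
        have e := hE i' j
        rw [gH_apply0 lam g i' j hjk,
          Hg_apply lam g i' j (m := Mi) (by omega) i (by omega)] at e
        have hne0 : lam Mi ≠ 0 := ne_of_gt (hpos Mi)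
        rcases hvi with ⟨hpi, hvi'⟩ | ⟨hpi, hvi'⟩
        · rw [if_neg (by omega : ¬ (i' : ℕ) % 2 = 0)] at e
          have := mul_eq_zero.mp e.symm
          rcases this with h' | h'
          · exact absurd h' (neg_ne_zero.2 hne0)
          · exact h'
        · rw [if_pos (by omega : (i' : ℕ) % 2 = 0)] at e
          exact ((mul_eq_zero.mp e.symm).resolve_left hne0)
      · -- i in the tail, j in a block
        set Mj : Fin k := ⟨(j : ℕ) / 2, hjk⟩ with hMj
        have hMjv : (Mj : ℕ) = (j : ℕ) / 2 := rfl
        have hj'lt : (if (j : ℕ) % 2 = 0 then (j : ℕ) + 1 else (j : ℕ) - 1) < n := by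
          split <;> omega
        set j' : Fin n := ⟨_, hj'lt⟩ with hj'd
        have hvj : ((j : ℕ) % 2 = 0 ∧ (j' : ℕ) = (j : ℕ) + 1) ∨
            ((j : ℕ) % 2 = 1 ∧ (j' : ℕ) + 1 = (j : ℕ)) := by
          by_cases hp : (j : ℕ) % 2 = 0
          · exact Or.inl ⟨hp, by
              show (if (j : ℕ) % 2 = 0 then (j : ℕ) + 1 else (j : ℕ) - 1) = (j : ℕ) + 1
              rw [if_pos hp]⟩
          · refine Or.inr ⟨by omega, ?_⟩
            have hv' : (j' : ℕ) = (j : ℕ) - 1 := by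
              show (if (j : ℕ) % 2 = 0 then (j : ℕ) + 1 else (j : ℕ) - 1) = (j : ℕ) - 1
              rw [if_neg hp]
            omega
        have e := hE i j'
        rw [Hg_apply0 lam g i j' hik,
          gH_apply lam g i j' (m := Mj) (by omega) j (by omega)] at e
        have hne0 : lam Mj ≠ 0 := ne_of_gt (hpos Mj)
        rcases hvj with ⟨hpj, hvj'⟩ | ⟨hpj, hvj'⟩
        · rw [if_neg (by omega : ¬ (j' : ℕ) % 2 = 0)] at e
          exact (mul_eq_zero.mp e).resolve_left hne0
        · rw [if_pos (by omega : (j' : ℕ) % 2 = 0)] at e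
          rcases mul_eq_zero.mp e with h' | h'
          · exact absurd h' (neg_ne_zero.2 hne0)
          · exact h'
      · exfalso; omega
    have key : ∀ (i1 j1 : Fin n) (u v : ℕ) (hu : u < n) (hv : v < n),
        (i1 : ℕ) = u → (j1 : ℕ) = v → g i1 j1 = g ⟨u, hu⟩ ⟨v, hv⟩ := by
      intro i1 j1 u v hu hv h' h''
      rw [show i1 = ⟨u, hu⟩ from Fin.ext h', show j1 = ⟨v, hv⟩ from Fin.ext h'']
    have claim2 : ∀ (v : ℕ) (h1 : 2 * v + 1 < n) (hv : v < k),
        g ⟨2 * v + 1, h1⟩ ⟨2 * v + 1, h1⟩ = g ⟨2 * v, by omega⟩ ⟨2 * v, by omega⟩ ∧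
        g ⟨2 * v, by omega⟩ ⟨2 * v + 1, h1⟩ = -(g ⟨2 * v + 1, h1⟩ ⟨2 * v, by omega⟩) := by
      intro v h1 hv
      set i : Fin n := ⟨2 * v, by omega⟩ with hid
      set i' : Fin n := ⟨2 * v + 1, h1⟩ with hi'd
      set M : Fin k := ⟨v, hv⟩ with hMd
      have hiv : (i : ℕ) = 2 * v := rfl
      have hi'v : (i' : ℕ) = 2 * v + 1 := rfl
      have hMv : (M : ℕ) = v := rfl
      have e := hE i i
      rw [gH_apply lam g i i (m := M) (by omega) i' (by omega),
        Hg_apply lam g i i (m := M) (by omega) i' (by omega)] at e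
      rw [if_pos (by omega : (i : ℕ) % 2 = 0), if_pos (by omega : (i : ℕ) % 2 = 0)] at e
      have hl0 : lam M ≠ 0 := ne_of_gt (hpos M)
      have part2 : g i i' = -(g i' i) := by
        have hz : lam M * (g i i' + g i' i) = 0 := by linear_combination -e
        rcases mul_eq_zero.mp hz with h' | h'
        · exact absurd h' hl0
        · linarith [h']
      have e' := hE i' i
      rw [gH_apply lam g i' i (m := M) (by omega) i' (by omega),
        Hg_apply lam g i' i (m := M) (by omega) i (by omega)] at e'
      rw [if_pos (by omega : (i : ℕ) % 2 = 0), if_neg (by omega : ¬ (i' : ℕ) % 2 = 0)] at e'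
      have part1 : g i' i' = g i i := mul_left_cancel₀ (neg_ne_zero.2 hl0) e'
      exact ⟨part1, part2⟩
    have claim3 : ∀ (v : ℕ) (h1 : 2 * v + 1 < n) (hv : v < k),
        g ⟨2 * v, by omega⟩ ⟨2 * v, by omega⟩ ^ 2 +
          g ⟨2 * v + 1, h1⟩ ⟨2 * v, by omega⟩ ^ 2 = 1 := by
      intro v h1 hv
      set i : Fin n := ⟨2 * v, by omega⟩ with hid
      set i' : Fin n := ⟨2 * v + 1, h1⟩ with hi'd
      have hiv : (i : ℕ) = 2 * v := rfl
      have hi'v : (i' : ℕ) = 2 * v + 1 := rfl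
      have e := congrFun (congrFun hO i) i
      rw [Matrix.mul_apply] at e
      simp only [Matrix.transpose_apply] at e
      rw [Matrix.one_apply_eq] at e
      rw [sum_eq_pair (fun m => g i m * g i m) i i'
        (by intro hcc; have := congrArg Fin.val hcc; omega)
        (fun m' hm1 hm2 => by
          have hv1 : (m' : ℕ) ≠ (i : ℕ) := fun hcc => hm1 (Fin.ext hcc)
          have hv2 : (m' : ℕ) ≠ (i' : ℕ) := fun hcc => hm2 (Fin.ext hcc)
          show g i m' * g i m' = 0
          rw [claim1 i m' (by omega)]
          exact zero_mul 0)] at e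
      have hp2 := (claim2 v h1 hv).2
      have hrw : g i i' = -(g i' i) := hp2
      rw [hrw] at e
      linear_combination e
    have claim3' : ∀ hlt : 2 * k < n,
        g ⟨2 * k, hlt⟩ ⟨2 * k, hlt⟩ * g ⟨2 * k, hlt⟩ ⟨2 * k, hlt⟩ = 1 := by
      intro hlt
      set i : Fin n := ⟨2 * k, hlt⟩ with hid
      have hiv : (i : ℕ) = 2 * k := rfl
      have e := congrFun (congrFun hO i) i
      rw [Matrix.mul_apply] at e
      simp only [Matrix.transpose_apply] at e
      rw [Matrix.one_apply_eq] at e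
      rw [Finset.sum_eq_single i (fun m' _ hm1 => by
        have hv1 : (m' : ℕ) ≠ (i : ℕ) := fun hcc => hm1 (Fin.ext hcc)
        have := m'.isLt
        show g i m' * g i m' = 0
        rw [claim1 i m' (by omega)]
        exact zero_mul 0) (fun hcc => absurd (Finset.mem_univ _) hcc)] at e
      exact e
    set A : Fin k → ℝ :=
      fun m => g ⟨2 * (m : ℕ), by have := m.isLt; omega⟩
        ⟨2 * (m : ℕ), by have := m.isLt; omega⟩ with hA
    set B : Fin k → ℝ :=
      fun m => g ⟨2 * (m : ℕ) + 1, by have := m.isLt; omega⟩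
        ⟨2 * (m : ℕ), by have := m.isLt; omega⟩ with hB
    have hAB : ∀ m : Fin k, A m ^ 2 + B m ^ 2 = 1 := by
      intro m
      have h1 : 2 * (m : ℕ) + 1 < n := by have := m.isLt; omega
      exact claim3 (m : ℕ) h1 m.2
    choose θ hθ using fun m => exists_cos_sin (hAB m)
    set C : ℝ := if h' : 2 * k < n then g ⟨2 * k, h'⟩ ⟨2 * k, h'⟩ else 1 with hC
    have hgBD : g = BD n k A B C := by
      ext i j
      have hin := i.isLt
      have hjn := j.isLt
      by_cases hij : (i : ℕ) = (j : ℕ)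
      · by_cases hik : (i : ℕ) / 2 < k
        · rw [BD_diag hij (m := ⟨(i : ℕ) / 2, hik⟩) rfl]
          by_cases hpar : (i : ℕ) % 2 = 0
          · exact key i j (2 * ((i : ℕ) / 2)) (2 * ((i : ℕ) / 2)) (by omega) (by omega)
              (by omega) (by omega)
          · exact (key i j (2 * ((i : ℕ) / 2) + 1) (2 * ((i : ℕ) / 2) + 1)
              (by omega) (by omega) (by omega) (by omega)).trans
              (claim2 ((i : ℕ) / 2) (by omega) hik).1
        · rw [BD_diag' hij hik]
          have h2k' : 2 * k < n := by omega
          rw [hC, dif_pos h2k']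
          exact key i j (2 * k) (2 * k) h2k' h2k' (by omega) (by omega)
      · by_cases hup : (j : ℕ) = (i : ℕ) + 1 ∧ (i : ℕ) % 2 = 0 ∧ (i : ℕ) / 2 < k
        · rw [BD_up hup.1 hup.2.1 (m := ⟨(i : ℕ) / 2, hup.2.2⟩) rfl]
          exact (key i j (2 * ((i : ℕ) / 2)) (2 * ((i : ℕ) / 2) + 1) (by omega) (by omega)
            (by omega) (by omega)).trans (claim2 ((i : ℕ) / 2) (by omega) hup.2.2).2
        · by_cases hlo : (i : ℕ) = (j : ℕ) + 1 ∧ (j : ℕ) % 2 = 0 ∧ (j : ℕ) / 2 < k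
          · rw [BD_lo hlo.1 hlo.2.1 (m := ⟨(j : ℕ) / 2, hlo.2.2⟩) rfl]
            exact key i j (2 * ((j : ℕ) / 2) + 1) (2 * ((j : ℕ) / 2)) (by omega) (by omega)
              (by omega) (by omega)
          · rw [BD_zero hij hup hlo]
            exact claim1 i j (by omega)
    have hC1 : C = 1 := by
      by_cases h2k : 2 * k < n
      · have hCC : C * C = 1 := by rw [hC, dif_pos h2k]; exact claim3' h2k
        rcases mul_self_eq_one_iff.mp hCC with h' | h'
        · exact h'
        · exfalso
          set F : ℝ → Matrix (Fin n) (Fin n) ℝ :=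
            fun t => BD n k (fun m => Real.cos (t * θ m)) (fun m => Real.sin (t * θ m)) (-1)
            with hF
          have hF1 : F 1 = g := by
            refine (BD_congr (fun m => ?_) (fun m => ?_) h'.symm).trans hgBD.symm
            · rw [one_mul]; exact (hθ m).1
            · rw [one_mul]; exact (hθ m).2
          have hFo : ∀ t : ℝ, F t * (F t)ᵀ = 1 := by
            intro t
            show BD n k (fun m => Real.cos (t * θ m)) (fun m => Real.sin (t * θ m)) (-1) *
              (BD n k (fun m => Real.cos (t * θ m)) (fun m => Real.sin (t * θ m)) (-1))ᵀ = 1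
            rw [BD_transpose, mul_BD hnk]
            exact (BD_congr
              (fun m => by linear_combination Real.sin_sq_add_cos_sq (t * θ m))
              (fun m => by ring) (by norm_num)).trans one_eq_BD.symm
          have hFdet : ∀ t : ℝ, (F t).det ≠ 0 := by
            intro t hdt
            have hh := congrArg Matrix.det (hFo t)
            rw [Matrix.det_mul, Matrix.det_transpose, Matrix.det_one, hdt] at hh
            norm_num at hh
          have hF0 : (F 0).det = -1 := by
            have hF0' : F 0 = BD n k (fun _ => 1) (fun _ => 0) (-1) :=
              BD_congr (fun m => by rw [zero_mul, Real.cos_zero])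
                (fun m => by rw [zero_mul, Real.sin_zero]) rfl
            rw [hF0', BD_diagonal, Matrix.det_diagonal]
            rw [Finset.prod_eq_single (⟨2 * k, h2k⟩ : Fin n) (fun x _ hx => by
              rw [if_pos (by
                have hxv : (x : ℕ) ≠ 2 * k := fun hh => hx (Fin.ext hh)
                have := x.isLt
                omega)]) (fun hh => absurd (Finset.mem_univ _) hh)]
            rw [if_neg (by show ¬ (2 * k) / 2 < k; omega)]
          have hcont : Continuous fun t : ℝ => (F t).det := by
            apply Continuous.matrix_det
            apply continuous_matrix
            intro i j
            simp only [hF, BD]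
            split_ifs <;> fun_prop
          obtain ⟨t, _, ht⟩ := intermediate_value_Icc (by norm_num : (0 : ℝ) ≤ 1)
            hcont.continuousOn
            (show (0 : ℝ) ∈ Set.Icc ((F 0).det) ((F 1).det) by
              rw [hF0, hF1]; exact ⟨by norm_num, le_of_lt hg⟩)
          exact hFdet t ht
      · rw [hC, dif_neg h2k]
    exact ⟨θ, by
      rw [hgBD, hC1, RotMat_eq_BD]
      exact BD_congr (fun m => (hθ m).1.symm) (fun m => (hθ m).2.symm) rfl⟩
  · rintro ⟨rfl, θ, rfl⟩
    have hO : RotMat n k θ * (RotMat n k θ)ᵀ = 1 := by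
      rw [RotMat_eq_BD, BD_transpose, mul_BD hnk]
      exact (BD_congr (fun m => by linear_combination Real.sin_sq_add_cos_sq (θ m))
        (fun m => by ring) (by norm_num)).trans one_eq_BD.symm
    have hOt : (RotMat n k θ)ᵀ * RotMat n k θ = 1 := mul_eq_one_comm.mp hO
    have hginv : (RotMat n k θ)⁻¹ = (RotMat n k θ)ᵀ := Matrix.inv_eq_right_inv hO
    have hgtinv : ((RotMat n k θ)ᵀ)⁻¹ = RotMat n k θ := Matrix.inv_eq_right_inv hOt
    have hcom : RotMat n k θ * Hmat n k lam = Hmat n k lam * RotMat n k θ := by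
      rw [RotMat_eq_BD, Hmat_eq_BD, mul_BD hnk, mul_BD hnk]
      exact BD_congr (fun m => by ring) (fun m => by ring) (by ring)
    simp only [coadjAct, Prod.mk.injEq, mul_one]
    constructor
    · rw [hgtinv, hginv]; exact hO
    · rw [hgtinv, hginv, zero_mul, add_zero, hcom, Matrix.mul_assoc, hO, Matrix.mul_one]
end Main
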